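/- Let f = (f_x)_{x∈𝒢} ∈ ⊕_{x∈𝒢} C(Δ_x; ℤ) and suppose L_α f ∈ ℜ. Then for every x ∈ 𝒢 the function f_x is constant on Δ_x; that is, there exists n_x ∈ ℤ with f_x = n_x · 1_{Δ_x}. -/

import Mathlib

open OnePoint

noncomputable section

namespace CKO

variable {G : Type*}

/-- The submonoid `𝔽⁺` of the free group generated by the generators. -/
def pos (G : Type*) : Submonoid (FreeGroup G) :=
  Submonoid.closure (Set.range (FreeGroup.of : G → FreeGroup G))

/-- The defining relations of `Ω_A^τ` for a subset `ξ ⊆ 𝔽`, identified with a point of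
`{0,1}^𝔽`: (a) `e ∈ ξ` and `ξ` contains every initial subword (prefix of the reduced word) of
each of its elements; (b) each `ω ∈ ξ` has at most one `y ∈ G` with `ωy ∈ ξ`; (c) if
`ω, ωy ∈ ξ` then `ωx⁻¹ ∈ ξ ↔ A(x,y) = 1`. -/
def IsCK [DecidableEq G] (A : G → G → Bool) (ξ : FreeGroup G → Bool) : Prop :=
  ξ 1 = true ∧
  (∀ ω : FreeGroup G, ξ ω = true → ∀ p : List (G × Bool), p <+: ω.toWord →
    ξ (FreeGroup.mk p) = true) ∧
  (∀ ω : FreeGroup G, ξ ω = true → ∀ y z : G,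
    ξ (ω * FreeGroup.of y) = true → ξ (ω * FreeGroup.of z) = true → y = z) ∧
  (∀ ω : FreeGroup G, ξ ω = true → ∀ y : G, ξ (ω * FreeGroup.of y) = true →
    ∀ x : G, (ξ (ω * (FreeGroup.of x)⁻¹) = true ↔ A x y = true))

/-- `ξ` is unbounded: it has no upper bound in `𝔽` for the left order `s ≤ t ↔ s⁻¹t ∈ 𝔽⁺`. -/
def Unbounded (ξ : FreeGroup G → Bool) : Prop :=
  ¬ ∃ t : FreeGroup G, ∀ s : FreeGroup G, ξ s = true → s⁻¹ * t ∈ pos G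

/-- `Ω̃_A`: the closure in `{0,1}^𝔽` of the set of unbounded elements of `Ω_A^τ`. -/
def OmegaT [DecidableEq G] (A : G → G → Bool) : Set (FreeGroup G → Bool) :=
  closure {ξ | IsCK A ξ ∧ Unbounded ξ}

end CKO

namespace CKO

variable {G : Type*} [DecidableEq G]

/-- Membership in `⊕_{x∈G} C(Δ_x; ℤ)`: finitely many nonzero components, each vanishing
outside `Δ_x` and restricting to a continuous function on `Ω̃_A`. -/
def MemDirectSum (A : G → G → Bool) (f : G → (FreeGroup G → Bool) → ℤ) : Prop :=
  {x : G | f x ≠ 0}.Finite ∧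
  (∀ (x : G) (ξ : FreeGroup G → Bool),
    (ξ ∉ OmegaT A ∨ ξ (FreeGroup.of x) ≠ true) → f x ξ = 0) ∧
  (∀ x : G, Continuous fun ξ : OmegaT A => f x (ξ : FreeGroup G → Bool))

/-- The map `L_α`: `(L_α f)(ξ) = Σ_x f_x(ξ) − Σ_{x : x⁻¹ ∈ ξ} f_x(xξ)`. -/
def Lalpha (f : G → (FreeGroup G → Bool) → ℤ) (ξ : FreeGroup G → Bool) : ℤ :=
  (∑ᶠ x : G, f x ξ) -
    ∑ᶠ x : G, if ξ ((FreeGroup.of x)⁻¹) = true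
      then f x fun ω => ξ ((FreeGroup.of x)⁻¹ * ω) else 0

/-- The ring `ℜ` of functions on `Ω̃_A` generated by `1` and the characteristic functions of
the `Δ_i` and `Δ_{i⁻¹}`. -/
def frakR (A : G → G → Bool) : Subring (OmegaT A → ℤ) :=
  Subring.closure
    ((Set.range fun i : G => fun ξ : OmegaT A =>
        if (ξ : FreeGroup G → Bool) (FreeGroup.of i) = true then (1 : ℤ) else 0) ∪
     (Set.range fun i : G => fun ξ : OmegaT A =>
        if (ξ : FreeGroup G → Bool) ((FreeGroup.of i)⁻¹) = true then (1 : ℤ) else 0))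

end CKO


namespace CKOAux

open CKO FreeGroup

set_option linter.unusedSectionVars false

variable {G : Type*} [DecidableEq G]

/-! ### Reduced-word combinatorics -/

lemma reduced_no_cancel {L : List (G × Bool)} (h : FreeGroup.reduce L = L)
    {P Q : List (G × Bool)} {x : G} {b : Bool} : L ≠ P ++ (x, b) :: (x, !b) :: Q :=
  fun hL => FreeGroup.reduce.not (L₁ := L) (by rw [h, hL])

lemma reduced_of_no_cancel {L : List (G × Bool)}
    (h : ∀ (P Q : List (G × Bool)) (x : G) (b : Bool), L ≠ P ++ (x, b) :: (x, !b) :: Q) :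
    FreeGroup.reduce L = L := by
  have hred : FreeGroup.Red L (FreeGroup.reduce L) := FreeGroup.reduce.red
  rcases Relation.ReflTransGen.cases_head hred with h' | ⟨c, hstep, _⟩
  · exact h'.symm
  · cases hstep with
    | not => exact absurd rfl (h _ _ _ _)

lemma reduced_infix {L L' : List (G × Bool)} (h : FreeGroup.reduce L = L)
    (h' : L' <:+: L) : FreeGroup.reduce L' = L' := by
  apply reduced_of_no_cancel
  intro P Q x b hL'
  obtain ⟨s, t, hst⟩ := h'
  exact reduced_no_cancel h (P := s ++ P) (Q := Q ++ t) (x := x) (b := b)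
    (by rw [← hst, hL']; simp)

lemma reduce_cons_eq_cons {L : List (G × Bool)} (h : FreeGroup.reduce L = L) {a : G × Bool}
    (hhd : ∀ hd, L.head? = Option.some hd → ¬(a.1 = hd.1 ∧ a.2 = !hd.2)) :
    FreeGroup.reduce (a :: L) = a :: L := by
  rw [FreeGroup.reduce.cons, h]
  cases L with
  | nil => rfl
  | cons hd tl =>
    simp only [List.casesOn]
    rw [if_neg (hhd hd rfl)]

lemma of_inv_eq_mk (w : G) : (FreeGroup.of w)⁻¹ = FreeGroup.mk [(w, false)] := by
  rw [show FreeGroup.of w = FreeGroup.mk [(w, true)] from rfl, FreeGroup.inv_mk]; rfl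

lemma mk_cons_neg (w : G) (L : List (G × Bool)) :
    FreeGroup.mk ((w, false) :: L) = (FreeGroup.of w)⁻¹ * FreeGroup.mk L := by
  rw [of_inv_eq_mk, FreeGroup.mul_mk]; rfl

lemma mk_cons_pos (w : G) (L : List (G × Bool)) :
    FreeGroup.mk ((w, true) :: L) = FreeGroup.of w * FreeGroup.mk L := by
  rw [show FreeGroup.of w = FreeGroup.mk [(w, true)] from rfl, FreeGroup.mul_mk]; rfl

lemma mk_concat (L : List (G × Bool)) (a : G × Bool) :
    FreeGroup.mk (L ++ [a]) = FreeGroup.mk L * FreeGroup.mk [a] := by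
  rw [FreeGroup.mul_mk]

/-- toWord of `w⁻¹ * t` when `t` does not start with `w`. -/
lemma toWord_inv_mul_of_ne {w : G} {t : FreeGroup G} (h : t.toWord.head? ≠ Option.some (w, true)) :
    ((FreeGroup.of w)⁻¹ * t).toWord = (w, false) :: t.toWord := by
  conv_lhs => rw [← FreeGroup.mk_toWord (x := t), ← mk_cons_neg, FreeGroup.toWord_mk]
  apply reduce_cons_eq_cons (FreeGroup.reduce_toWord t)
  rintro hd hhd ⟨h1, h2⟩
  apply h
  rw [hhd]
  have h3 : hd.2 = true := by
    cases hd2 : hd.2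
    · rw [hd2] at h2; simp at h2
    · rfl
  obtain ⟨a, b⟩ := hd
  simp only at h1 h3
  rw [h1, h3]

/-- When `t` starts with `(w, true)`, `w⁻¹ * t = mk (tail)` and the tail is its word. -/
lemma inv_mul_of_head {w : G} {t : FreeGroup G} (h : t.toWord.head? = Option.some (w, true)) :
    (FreeGroup.of w)⁻¹ * t = FreeGroup.mk t.toWord.tail ∧
      ((FreeGroup.of w)⁻¹ * t).toWord = t.toWord.tail := by
  obtain ⟨tl, htl⟩ : ∃ tl, t.toWord = (w, true) :: tl := by
    cases htw : t.toWord with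
    | nil => rw [htw] at h; simp at h
    | cons a l => rw [htw] at h; simp at h; exact ⟨l, by rw [h]⟩
  have ht : t = FreeGroup.of w * FreeGroup.mk tl := by
    conv_lhs => rw [← FreeGroup.mk_toWord (x := t)]
    rw [htl, mk_cons_pos]
  have hred : FreeGroup.reduce tl = tl :=
    reduced_infix (L := t.toWord) (FreeGroup.reduce_toWord t)
      ⟨[(w, true)], [], by rw [htl]; simp⟩
  have hmk : (FreeGroup.of w)⁻¹ * t = FreeGroup.mk tl := by rw [ht]; group
  have htw2 : ((FreeGroup.of w)⁻¹ * t).toWord = tl := by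
    rw [hmk, FreeGroup.toWord_mk, hred]
  rw [htl]
  exact ⟨hmk, htw2⟩

/-! ### The negative region is determined by the first letter -/

variable {A : G → G → Bool}

/-- Characterization of membership of "negative-headed" words in a CK point: it depends only
on `A` and the first letter `z`. -/
lemma neg_chain_char {ξ : FreeGroup G → Bool} (hCK : IsCK A ξ)
    {z : G} (hz : ξ (FreeGroup.of z) = true) :
    ∀ L : List (G × Bool), FreeGroup.reduce L = L →
    (∀ p, L.head? = Option.some p → p.2 = false) →
    (ξ (FreeGroup.mk L) = true ↔
      ((∀ p ∈ L, p.2 = false) ∧ List.Chain (fun a b => A b.1 a.1 = true) (z, true) L)) := by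
  intro L
  induction L using List.reverseRecOn with
  | nil =>
    intro _ _
    have h1 : FreeGroup.mk ([] : List (G × Bool)) = 1 := rfl
    rw [h1, hCK.1]
    simp [List.Chain.nil]
  | append_singleton L' ℓ ih =>
    intro hred hneg
    have hredL' : FreeGroup.reduce L' = L' := reduced_infix hred ⟨[], [ℓ], by simp⟩
    rcases List.eq_nil_or_concat L' with rfl | ⟨M, a, rfl⟩
    · -- singleton case : L = [ℓ]
      obtain ⟨v, bv⟩ := ℓ
      have hbv : bv = false := hneg _ rfl
      subst hbv
      have hiff := hCK.2.2.2 1 hCK.1 z (by rwa [one_mul]) v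
      rw [one_mul] at hiff
      rw [List.nil_append, show FreeGroup.mk [(v, false)] = (FreeGroup.of v)⁻¹ from
        (of_inv_eq_mk v).symm]
      constructor
      · intro hmem
        refine ⟨by simp, ?_⟩
        exact List.Chain.cons (hiff.mp hmem) List.Chain.nil
      · rintro ⟨-, hch⟩
        unfold List.Chain at hch; rw [List.isChain_pair] at hch
        exact hiff.mpr hch
    · -- L = (M ++ [a]) ++ [ℓ]
      simp only [List.concat_eq_append] at hred hneg hredL' ih ⊢
      have hL'ne : (M ++ [a] : List (G × Bool)) ≠ [] := by simp
      have hneg' : ∀ p, (M ++ [a]).head? = Option.some p → p.2 = false := by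
        intro p hp
        apply hneg
        cases M with
        | nil => simpa using hp
        | cons c rest => simpa using hp
      have ih' := ih hredL' hneg'
      by_cases hmemL' : ξ (FreeGroup.mk (M ++ [a])) = true
      · obtain ⟨hallneg', hch'⟩ := ih'.mp hmemL'
        obtain ⟨w, bw⟩ := a
        have hbw : bw = false := hallneg' (w, bw) (by simp)
        subst hbw
        -- the node mk L' has positive successor w
        have hmkL' : FreeGroup.mk (M ++ [(w, false)]) =
            FreeGroup.mk M * (FreeGroup.of w)⁻¹ := by
          rw [mk_concat, of_inv_eq_mk]
        have hsucc : ξ (FreeGroup.mk (M ++ [(w, false)]) * FreeGroup.of w) = true := by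
          rw [hmkL', inv_mul_cancel_right]
          exact hCK.2.1 _ hmemL' M (by rw [FreeGroup.toWord_mk, hredL']; exact ⟨[(w, false)], rfl⟩)
        obtain ⟨y, by'⟩ := ℓ
        cases by' with
        | true =>
          have hyw : y ≠ w := by
            intro hyw
            subst hyw
            exact reduced_no_cancel hred (P := M) (Q := []) (x := y) (b := false)
              (by simp)
          have hmul : FreeGroup.mk ((M ++ [(w, false)]) ++ [(y, true)]) =
              FreeGroup.mk (M ++ [(w, false)]) * FreeGroup.of y := by
            rw [mk_concat]; rfl
          constructor
          · intro hmem
            exfalso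
            apply hyw
            refine hCK.2.2.1 _ hmemL' y w ?_ hsucc
            rw [← hmul]
            exact hmem
          · rintro ⟨hallneg, -⟩
            exact absurd (hallneg (y, true) (by simp)) (by simp)
        | false =>
          have hiff := hCK.2.2.2 _ hmemL' w hsucc y
          have hmkL : FreeGroup.mk ((M ++ [(w, false)]) ++ [(y, false)]) =
              FreeGroup.mk (M ++ [(w, false)]) * (FreeGroup.of y)⁻¹ := by
            rw [mk_concat, of_inv_eq_mk]
          rw [hmkL, hiff]
          -- Now RHS ↔ A y w
          have hassoc : (M ++ [(w, false)]) ++ [(y, false)] =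
              M ++ (w, false) :: [(y, false)] := by simp
          constructor
          · intro hA
            refine ⟨?_, ?_⟩
            · intro p hp
              rcases List.mem_append.mp hp with h1 | h1
              · exact hallneg' p h1
              · simp at h1; rw [h1]
            · rw [hassoc]; unfold List.Chain; rw [List.isChain_cons_split]
              exact ⟨hch', List.isChain_pair.mpr hA⟩
          · rintro ⟨-, hch⟩
            rw [hassoc] at hch; unfold List.Chain at hch; rw [List.isChain_cons_split] at hch
            have h2 := hch.2
            rw [List.isChain_pair] at h2
            exact h2
      · -- mk L' not in ξ : both sides false
        constructor
        · intro hmem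
          exfalso
          apply hmemL'
          exact hCK.2.1 _ hmem (M ++ [a])
            (by rw [FreeGroup.toWord_mk, hred]; exact ⟨[ℓ], rfl⟩)
        · rintro ⟨hallneg, hch⟩
          exfalso
          apply hmemL'
          apply ih'.mpr
          refine ⟨fun p hp => hallneg p (List.mem_append.mpr (Or.inl hp)), ?_⟩
          obtain ⟨w, bw⟩ := a
          have hassoc : (M ++ [(w, bw)]) ++ [ℓ] = M ++ (w, bw) :: [ℓ] := by simp
          rw [hassoc] at hch; unfold List.Chain at hch; rw [List.isChain_cons_split] at hch
          exact hch.1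

/-- Two CK points with the same first letter agree on negative-headed words. -/
lemma neg_region_eq {ξ ξ' : FreeGroup G → Bool} (hCK : IsCK A ξ) (hCK' : IsCK A ξ')
    {z : G} (hz : ξ (FreeGroup.of z) = true) (hz' : ξ' (FreeGroup.of z) = true)
    (L : List (G × Bool)) (hred : FreeGroup.reduce L = L)
    (hneg : ∀ p, L.head? = Option.some p → p.2 = false) :
    ξ (FreeGroup.mk L) = ξ' (FreeGroup.mk L) := by
  rw [Bool.eq_iff_iff]
  exact (neg_chain_char hCK hz L hred hneg).trans (neg_chain_char hCK' hz' L hred hneg).symm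

/-! ### Topological facts -/

lemma isOpen_coord (t : FreeGroup G) : IsOpen {ξ : FreeGroup G → Bool | ξ t = true} := by
  have h : {ξ : FreeGroup G → Bool | ξ t = true} =
      (fun ξ : FreeGroup G → Bool => ξ t) ⁻¹' {true} := rfl
  rw [h]
  exact IsOpen.preimage (continuous_apply t) (isOpen_discrete _)

lemma isClosed_coord (t : FreeGroup G) (b : Bool) :
    IsClosed {ξ : FreeGroup G → Bool | ξ t = b} := by
  have h : {ξ : FreeGroup G → Bool | ξ t = b} =
      (fun ξ : FreeGroup G → Bool => ξ t) ⁻¹' {b} := rfl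
  rw [h]
  exact IsClosed.preimage (continuous_apply t) (isClosed_discrete _)

lemma isClosed_imp {X : Type*} [TopologicalSpace X] {p q : X → Prop}
    (hp : IsOpen {x | p x}) (hq : IsClosed {x | q x}) : IsClosed {x | p x → q x} := by
  have h : {x | p x → q x} = {x | p x}ᶜ ∪ {x | q x} := by
    ext x; by_cases hx : p x <;> simp [hx]
  rw [h]
  exact IsClosed.union (isClosed_compl_iff.mpr hp) hq

lemma isClosed_isCK : IsClosed {ξ : FreeGroup G → Bool | IsCK A ξ} := by
  classical
  have hdecomp : {ξ : FreeGroup G → Bool | IsCK A ξ} =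
      {ξ : FreeGroup G → Bool | ξ 1 = true} ∩
      ({ξ : FreeGroup G → Bool | ∀ ω : FreeGroup G, ξ ω = true → ∀ p : List (G × Bool),
          p <+: ω.toWord → ξ (FreeGroup.mk p) = true} ∩
       ({ξ : FreeGroup G → Bool | ∀ ω : FreeGroup G, ξ ω = true → ∀ y z : G,
          ξ (ω * FreeGroup.of y) = true → ξ (ω * FreeGroup.of z) = true → y = z} ∩
        {ξ : FreeGroup G → Bool | ∀ ω : FreeGroup G, ξ ω = true → ∀ y : G,
          ξ (ω * FreeGroup.of y) = true →
          ∀ x : G, (ξ (ω * (FreeGroup.of x)⁻¹) = true ↔ A x y = true)})) := rfl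
  rw [hdecomp]
  refine IsClosed.inter (isClosed_coord 1 true)
    (IsClosed.inter ?_ (IsClosed.inter ?_ ?_))
  · rw [Set.setOf_forall]
    refine isClosed_iInter fun ω => ?_
    refine isClosed_imp (isOpen_coord ω) ?_
    rw [Set.setOf_forall]
    refine isClosed_iInter fun p => ?_
    by_cases hc : p <+: ω.toWord
    · simp only [hc, forall_const]
      exact isClosed_coord _ true
    · simp only [hc, false_implies, Set.setOf_true]
      exact isClosed_univ
  · rw [Set.setOf_forall]
    refine isClosed_iInter fun ω => ?_
    refine isClosed_imp (isOpen_coord ω) ?_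
    rw [Set.setOf_forall]
    refine isClosed_iInter fun y => ?_
    rw [Set.setOf_forall]
    refine isClosed_iInter fun z => ?_
    refine isClosed_imp (isOpen_coord _) (isClosed_imp (isOpen_coord _) ?_)
    by_cases hyz : y = z
    · simp only [hyz, Set.setOf_true]
      exact isClosed_univ
    · simp only [hyz, Set.setOf_false]
      exact isClosed_empty
  · rw [Set.setOf_forall]
    refine isClosed_iInter fun ω => ?_
    refine isClosed_imp (isOpen_coord ω) ?_
    rw [Set.setOf_forall]
    refine isClosed_iInter fun y => ?_
    refine isClosed_imp (isOpen_coord _) ?_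
    rw [Set.setOf_forall]
    refine isClosed_iInter fun x => ?_
    by_cases hA : A x y = true
    · simp only [hA, iff_true]
      exact isClosed_coord _ true
    · simp only [hA, Bool.false_eq_true, iff_false, Bool.not_eq_true]
      exact isClosed_coord (ω * (FreeGroup.of x)⁻¹) false

lemma mem_isCK {ξ : FreeGroup G → Bool} (hξ : ξ ∈ OmegaT A) : IsCK A ξ :=
  closure_minimal (fun _ hζ => hζ.1) isClosed_isCK hξ

/-! ### The shift maps `Ω̃_A` into itself -/

lemma shift_isCK {ζ : FreeGroup G → Bool} (hCK : IsCK A ζ) {w : G}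
    (hw : ζ ((FreeGroup.of w)⁻¹) = true) :
    IsCK A (fun ω => ζ ((FreeGroup.of w)⁻¹ * ω)) := by
  refine ⟨by simpa using hw, ?_, ?_, ?_⟩
  · intro ω hω p hp
    simp only at hω ⊢
    by_cases h : ω.toWord.head? = Option.some (w, true)
    · obtain ⟨heq, htw⟩ := inv_mul_of_head h
      obtain ⟨tl, htl⟩ : ∃ tl, ω.toWord = (w, true) :: tl := by
        cases htc : ω.toWord with
        | nil => rw [htc] at h; simp at h
        | cons a l => rw [htc] at h; simp at h; exact ⟨l, by rw [h]⟩
      cases p with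
      | nil =>
        show ζ ((FreeGroup.of w)⁻¹ * FreeGroup.mk []) = true
        have : ((FreeGroup.of w)⁻¹ * FreeGroup.mk []) = (FreeGroup.of w)⁻¹ := by
          rw [show FreeGroup.mk ([] : List (G × Bool)) = 1 from rfl, mul_one]
        rw [this]; exact hw
      | cons p0 q =>
        rw [htl] at hp
        obtain ⟨hp0, hq⟩ := List.cons_prefix_cons.mp hp
        subst hp0
        show ζ ((FreeGroup.of w)⁻¹ * FreeGroup.mk ((w, true) :: q)) = true
        rw [mk_cons_pos, inv_mul_cancel_left]
        refine hCK.2.1 _ hω q ?_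
        rw [htw, htl]
        exact hq
    · have hpre := hCK.2.1 _ hω ((w, false) :: p)
        (by rw [toWord_inv_mul_of_ne h]; exact List.cons_prefix_cons.mpr ⟨rfl, hp⟩)
      rwa [mk_cons_neg] at hpre
  · intro ω hω y z h1 h2
    simp only at hω h1 h2
    rw [← mul_assoc] at h1 h2
    exact hCK.2.2.1 _ hω y z h1 h2
  · intro ω hω y h1 x
    simp only at hω h1 ⊢
    rw [← mul_assoc] at h1 ⊢
    exact hCK.2.2.2 _ hω y h1 x

lemma shift_unbounded {ζ : FreeGroup G → Bool} (hUb : Unbounded ζ) {w : G} :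
    Unbounded (fun ω => ζ ((FreeGroup.of w)⁻¹ * ω)) := by
  rintro ⟨t, ht⟩
  refine hUb ⟨(FreeGroup.of w)⁻¹ * t, fun s hs => ?_⟩
  have h1 : ζ ((FreeGroup.of w)⁻¹ * (FreeGroup.of w * s)) = true := by
    rwa [inv_mul_cancel_left]
  have h2 := ht (FreeGroup.of w * s) h1
  rwa [mul_inv_rev, mul_assoc] at h2

lemma shift_mem {ξ : FreeGroup G → Bool} (hξ : ξ ∈ OmegaT A) (w : G)
    (hw : ξ ((FreeGroup.of w)⁻¹) = true) :
    (fun ω => ξ ((FreeGroup.of w)⁻¹ * ω)) ∈ OmegaT A := by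
  classical
  set S : Set (FreeGroup G → Bool) := {ζ | IsCK A ζ ∧ Unbounded ζ} with hS
  set Φ : (FreeGroup G → Bool) → (FreeGroup G → Bool) :=
    fun ζ ω => ζ ((FreeGroup.of w)⁻¹ * ω) with hΦ
  have hcont : Continuous Φ := continuous_pi fun ω => continuous_apply _
  have hU : IsOpen {ζ : FreeGroup G → Bool | ζ ((FreeGroup.of w)⁻¹) = true} :=
    isOpen_coord _
  have h1 : ξ ∈ closure ({ζ : FreeGroup G → Bool | ζ ((FreeGroup.of w)⁻¹) = true} ∩ S) :=
    hU.inter_closure ⟨hw, hξ⟩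
  have h2 : Φ ξ ∈ closure (Φ '' ({ζ : FreeGroup G → Bool |
      ζ ((FreeGroup.of w)⁻¹) = true} ∩ S)) :=
    image_closure_subset_closure_image hcont (Set.mem_image_of_mem Φ h1)
  have h3 : Φ '' ({ζ : FreeGroup G → Bool | ζ ((FreeGroup.of w)⁻¹) = true} ∩ S) ⊆ S := by
    rintro _ ⟨ζ, ⟨hwζ, hCK, hUb⟩, rfl⟩
    exact ⟨shift_isCK hCK hwζ, shift_unbounded hUb⟩
  exact closure_mono h3 h2

/-! ### Functions in `ℜ` only depend on depth-one coordinates -/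

lemma frakR_agree {h : ↥(OmegaT A) → ℤ} (hh : h ∈ frakR A)
    (ξ ξ' : ↥(OmegaT A))
    (hag : ∀ i : G, ξ.1 (FreeGroup.of i) = ξ'.1 (FreeGroup.of i) ∧
      ξ.1 ((FreeGroup.of i)⁻¹) = ξ'.1 ((FreeGroup.of i)⁻¹)) :
    h ξ = h ξ' := by
  induction hh using Subring.closure_induction with
  | mem g hg =>
    rcases hg with ⟨i, rfl⟩ | ⟨i, rfl⟩
    · simp only
      rw [(hag i).1]
    · simp only
      rw [(hag i).2]
  | zero => rfl
  | one => rfl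
  | add x y hx hy ihx ihy => simp only [Pi.add_apply, ihx, ihy]
  | neg x hx ihx => simp only [Pi.neg_apply, ihx]
  | mul x y hx hy ihx ihy => simp only [Pi.mul_apply, ihx, ihy]

/-! ### Continuous `ℤ`-valued functions depend on finitely many coordinates -/

lemma exists_dep {F : (FreeGroup G → Bool) → ℤ}
    (hF : Continuous fun ξ : OmegaT A => F ξ.1) :
    ∃ D : Finset (FreeGroup G), ∀ ξ ξ' : OmegaT A,
      (∀ t ∈ D, ξ.1 t = ξ'.1 t) → F ξ.1 = F ξ'.1 := by
  classical
  have key : ∀ ξ : OmegaT A, ∃ I : Finset (FreeGroup G),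
      ∀ ζ : OmegaT A, (∀ t ∈ I, ζ.1 t = ξ.1 t) → F ζ.1 = F ξ.1 := by
    intro ξ
    have hopen : IsOpen ((fun ζ : OmegaT A => F ζ.1) ⁻¹' {F ξ.1}) :=
      hF.isOpen_preimage _ (isOpen_discrete _)
    rw [isOpen_induced_iff] at hopen
    obtain ⟨W, hW, hWpre⟩ := hopen
    have hξW : ξ.1 ∈ W := by
      have hm : ξ ∈ Subtype.val ⁻¹' W := by
        rw [hWpre]; exact Set.mem_singleton _
      exact hm
    obtain ⟨I, u, hu, hpi⟩ := isOpen_pi_iff.mp hW ξ.1 hξW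
    refine ⟨I, fun ζ hζ => ?_⟩
    have hζW : ζ.1 ∈ W := hpi (fun t ht => by rw [hζ t ht]; exact (hu t ht).2)
    have hm : ζ ∈ Subtype.val ⁻¹' W := hζW
    rw [hWpre] at hm
    exact hm
  choose I hI using key
  have hcov : (OmegaT A) ⊆ ⋃ ξ : OmegaT A, Set.pi ↑(I ξ) (fun t => {ξ.1 t}) := by
    intro ζ hζ
    exact Set.mem_iUnion.mpr ⟨⟨ζ, hζ⟩, fun t _ => rfl⟩
  have hcomp : IsCompact (OmegaT A) := isClosed_closure.isCompact
  obtain ⟨T, hT⟩ := hcomp.elim_finite_subcover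
    (fun ξ : OmegaT A => Set.pi ↑(I ξ) fun t => {ξ.1 t})
    (fun ξ => isOpen_set_pi (Finset.finite_toSet _) (fun a _ => isOpen_discrete _)) hcov
  refine ⟨T.biUnion (fun ξ => I ξ), fun ξ ξ' hag => ?_⟩
  obtain ⟨ξ₀, hξ₀T, hξcyl⟩ : ∃ ξ₀ ∈ T, ξ.1 ∈ Set.pi ↑(I ξ₀) fun t => {ξ₀.1 t} := by
    have := hT ξ.2
    simpa using this
  have hcyl1 : ∀ t ∈ I ξ₀, ξ.1 t = ξ₀.1 t := fun t ht => hξcyl t ht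
  have hcyl2 : ∀ t ∈ I ξ₀, ξ'.1 t = ξ₀.1 t := fun t ht => by
    rw [← hag t (Finset.mem_biUnion.mpr ⟨ξ₀, hξ₀T, ht⟩)]
    exact hcyl1 t ht
  rw [hI ξ₀ ξ hcyl1, hI ξ₀ ξ' hcyl2]

/-! ### Depth-one structure of CK points -/

lemma first_letter_unique {ξ : FreeGroup G → Bool} (hCK : IsCK A ξ) {z i : G}
    (hz : ξ (FreeGroup.of z) = true) (hi : ξ (FreeGroup.of i) = true) : i = z :=
  hCK.2.2.1 1 hCK.1 i z (by rwa [one_mul]) (by rwa [one_mul])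

lemma neg_letter_char {ξ : FreeGroup G → Bool} (hCK : IsCK A ξ) {z : G}
    (hz : ξ (FreeGroup.of z) = true) (i : G) : ξ ((FreeGroup.of i)⁻¹) = A i z := by
  have h := hCK.2.2.2 1 hCK.1 z (by rwa [one_mul]) i
  rw [one_mul] at h
  rw [Bool.eq_iff_iff]
  exact h

/-! ### The main downward induction -/

variable {f : G → (FreeGroup G → Bool) → ℤ}

lemma main_key (hf : MemDirectSum A f)
    (hL : (fun ξ : OmegaT A => Lalpha f (ξ : FreeGroup G → Bool)) ∈ frakR A) :
    ∀ (z : G) (ξ ξ' : FreeGroup G → Bool), ξ ∈ OmegaT A → ξ' ∈ OmegaT A →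
      ξ (FreeGroup.of z) = true → ξ' (FreeGroup.of z) = true → f z ξ = f z ξ' := by
  classical
  choose dep hdep using fun z : G => exists_dep (hf.2.2 z)
  set S : Finset G := hf.1.toFinset with hSdef
  set D : Finset (FreeGroup G) := S.biUnion dep with hDdef
  set N : ℕ := D.sup fun t => t.toWord.length with hNdef
  set P : ℕ → Prop := fun n => ∀ (z : G) (ξ ξ' : FreeGroup G → Bool),
    ξ ∈ OmegaT A → ξ' ∈ OmegaT A →
    ξ (FreeGroup.of z) = true → ξ' (FreeGroup.of z) = true →
    (∀ t : FreeGroup G, t.toWord.length < n → ξ t = ξ' t) → f z ξ = f z ξ' with hPdef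
  have base : ∀ n, N < n → P n := by
    intro n hn z ξ ξ' hξ hξ' hz hz' hagree
    by_cases hz0 : f z = 0
    · rw [hz0]
      rfl
    · have hzS : z ∈ S := by
        rw [hSdef, Set.Finite.mem_toFinset]
        exact hz0
      refine hdep z ⟨ξ, hξ⟩ ⟨ξ', hξ'⟩ (fun t ht => hagree t ?_)
      calc t.toWord.length ≤ N := Finset.le_sup (f := fun t : FreeGroup G => t.toWord.length)
            (Finset.mem_biUnion.mpr ⟨z, hzS, ht⟩)
        _ < n := hn
  have step : ∀ n, P (n + 1) → P n := by
    intro n ih z ξ ξ' hξ hξ' hz hz' hagree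
    have hCK : IsCK A ξ := mem_isCK hξ
    have hCK' : IsCK A ξ' := mem_isCK hξ'
    -- the shifted points agree one level deeper
    have hterm : ∀ w : G,
        (if ξ ((FreeGroup.of w)⁻¹) = true
          then f w fun ω => ξ ((FreeGroup.of w)⁻¹ * ω) else 0) =
        (if ξ' ((FreeGroup.of w)⁻¹) = true
          then f w fun ω => ξ' ((FreeGroup.of w)⁻¹ * ω) else 0) := by
      intro w
      have hneg : ξ ((FreeGroup.of w)⁻¹) = ξ' ((FreeGroup.of w)⁻¹) := by
        rw [neg_letter_char hCK hz w, neg_letter_char hCK' hz' w]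
      rw [hneg]
      by_cases hw : ξ' ((FreeGroup.of w)⁻¹) = true
      · rw [if_pos hw, if_pos hw]
        have hw1 : ξ ((FreeGroup.of w)⁻¹) = true := by rw [hneg]; exact hw
        refine ih w _ _ (shift_mem hξ w hw1) (shift_mem hξ' w hw) ?_ ?_ ?_
        · show ξ ((FreeGroup.of w)⁻¹ * FreeGroup.of w) = true
          rw [inv_mul_cancel]
          exact hCK.1
        · show ξ' ((FreeGroup.of w)⁻¹ * FreeGroup.of w) = true
          rw [inv_mul_cancel]
          exact hCK'.1
        · intro t ht
          show ξ ((FreeGroup.of w)⁻¹ * t) = ξ' ((FreeGroup.of w)⁻¹ * t)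
          by_cases hhd : t.toWord.head? = Option.some (w, true)
          · obtain ⟨-, htw⟩ := inv_mul_of_head hhd
            apply hagree
            rw [htw]
            cases htc : t.toWord with
            | nil => rw [htc] at hhd; simp at hhd
            | cons a l =>
              rw [htc] at ht
              simp only [List.length_cons] at ht
              simpa using Nat.lt_of_succ_lt_succ ht
          · have h1 : (FreeGroup.of w)⁻¹ * t = FreeGroup.mk ((w, false) :: t.toWord) := by
              rw [mk_cons_neg, FreeGroup.mk_toWord]
            have hred : FreeGroup.reduce ((w, false) :: t.toWord) = (w, false) :: t.toWord := by
              apply reduce_cons_eq_cons (FreeGroup.reduce_toWord t)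
              rintro hd hhd' ⟨hh1, hh2⟩
              apply hhd
              rw [hhd']
              have h3 : hd.2 = true := by
                cases hd2 : hd.2
                · rw [hd2] at hh2; simp at hh2
                · rfl
              obtain ⟨a, b⟩ := hd
              simp only at hh1 h3
              rw [hh1, h3]
            rw [h1]
            exact neg_region_eq hCK hCK' hz hz' _ hred
              (fun p hp => by simp at hp; rw [← hp])
      · rw [if_neg hw, if_neg hw]
    -- the first letters agree, together with all negative letters
    have hAg : ∀ i : G, ξ (FreeGroup.of i) = ξ' (FreeGroup.of i) ∧
        ξ ((FreeGroup.of i)⁻¹) = ξ' ((FreeGroup.of i)⁻¹) := by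
      intro i
      constructor
      · by_cases hi : i = z
        · subst hi; rw [hz, hz']
        · have h1 : ξ (FreeGroup.of i) = false := by
            cases hb : ξ (FreeGroup.of i)
            · rfl
            · exact absurd (first_letter_unique hCK hz hb) hi
          have h2 : ξ' (FreeGroup.of i) = false := by
            cases hb : ξ' (FreeGroup.of i)
            · rfl
            · exact absurd (first_letter_unique hCK' hz' hb) hi
          rw [h1, h2]
      · rw [neg_letter_char hCK hz i, neg_letter_char hCK' hz' i]
    have hg : Lalpha f ξ = Lalpha f ξ' := frakR_agree hL ⟨ξ, hξ⟩ ⟨ξ', hξ'⟩ hAg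
    have h1 : (∑ᶠ x : G, f x ξ) = f z ξ :=
      finsum_eq_single _ z (fun x hx => hf.2.1 x ξ
        (Or.inr (fun hcon => hx (first_letter_unique hCK hz hcon))))
    have h1' : (∑ᶠ x : G, f x ξ') = f z ξ' :=
      finsum_eq_single _ z (fun x hx => hf.2.1 x ξ'
        (Or.inr (fun hcon => hx (first_letter_unique hCK' hz' hcon))))
    have h2 : (∑ᶠ w : G, if ξ ((FreeGroup.of w)⁻¹) = true
          then f w fun ω => ξ ((FreeGroup.of w)⁻¹ * ω) else 0) =
        (∑ᶠ w : G, if ξ' ((FreeGroup.of w)⁻¹) = true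
          then f w fun ω => ξ' ((FreeGroup.of w)⁻¹ * ω) else 0) :=
      finsum_congr hterm
    unfold Lalpha at hg
    rw [h1, h1', h2] at hg
    omega
  have hall : ∀ m n, N + 1 ≤ n + m → P n := by
    intro m
    induction m with
    | zero => intro n hn; exact base n (by omega)
    | succ m ihm =>
      intro n hn
      by_cases h : N + 1 ≤ n + m
      · exact ihm n h
      · exact step n (ihm (n + 1) (by omega))
  intro z ξ ξ' hξ hξ' hz hz'
  exact hall (N + 1) 0 (by omega) z ξ ξ' hξ hξ' hz hz'
    (fun t ht => absurd ht (Nat.not_lt_zero _))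

end CKOAux
open scoped Classical

/-- If `f ∈ ⊕_{x∈G} C(Δ_x; ℤ)` and `L_α f ∈ ℜ`, then each component `f_x`
is constant on `Δ_x`, i.e. `f_x = n_x · 1_{Δ_x}` for some integer `n_x`. -/
theorem stmt_15 {G : Type*} [Nonempty G] [DecidableEq G]
    (A : G → G → Bool) (hA : ∀ i : G, ∃ j : G, A i j = true)
    (f : G → (FreeGroup G → Bool) → ℤ) (hf : CKO.MemDirectSum A f)
    (hL : (fun ξ : CKO.OmegaT A => CKO.Lalpha f (ξ : FreeGroup G → Bool)) ∈ CKO.frakR A) :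
    ∀ x : G, ∃ n : ℤ, ∀ ξ : FreeGroup G → Bool,
      f x ξ = if ξ ∈ CKO.OmegaT A ∧ ξ (FreeGroup.of x) = true then n else 0 := by
  intro x
  by_cases hex : ∃ ξ : FreeGroup G → Bool, ξ ∈ CKO.OmegaT A ∧ ξ (FreeGroup.of x) = true
  · obtain ⟨ξ₀, hξ₀, hx₀⟩ := hex
    refine ⟨f x ξ₀, fun ξ => ?_⟩
    by_cases hmem : ξ ∈ CKO.OmegaT A ∧ ξ (FreeGroup.of x) = true
    · rw [if_pos hmem]
      exact CKOAux.main_key hf hL x ξ ξ₀ hmem.1 hξ₀ hmem.2 hx₀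
    · rw [if_neg hmem]
      exact hf.2.1 x ξ (not_and_or.mp hmem)
  · refine ⟨0, fun ξ => ?_⟩
    rw [if_neg (fun hc => hex ⟨ξ, hc⟩)]
    exact hf.2.1 x ξ (not_and_or.mp (fun hc => hex ⟨ξ, hc⟩))
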